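/- Let n ≥ 2 be a natural number, a > 0 and Λ ≥ 0 real numbers, and let r ≥ Λ/(a(n−1)) + √(π²/a + Λ²/(a²(n−1)²)). Let f : ℝ → ℝ be continuously differentiable on [0, r] with |f(t)| ≤ Λ/π for all t ∈ [0, r], and let R : ℝ → ℝ be continuous on [0, r] with R(t) ≥ (n−1)a + f′(t) for all t ∈ [0, r]. Then ∫₀^r [ (n−1)(π/r)² cos²(πt/r) − R(t) sin²(πt/r) ] dt ≤ 0. -/

import Mathlib

open Real intervalIntegral

theorem theorem2_analytic_core (n : ℕ) (hn : 2 ≤ n) (a Λ r : ℝ)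
    (ha : 0 < a) (hΛ : 0 ≤ Λ)
    (hr : Λ / (a * ((n : ℝ) - 1))
        + Real.sqrt (π ^ 2 / a + Λ ^ 2 / (a ^ 2 * ((n : ℝ) - 1) ^ 2)) ≤ r)
    (f f' : ℝ → ℝ)
    (hf : ∀ t ∈ Set.Icc (0 : ℝ) r, HasDerivAt f (f' t) t)
    (hf'cont : ContinuousOn f' (Set.Icc 0 r))
    (hfbound : ∀ t ∈ Set.Icc (0 : ℝ) r, |f t| ≤ Λ / π)
    (R : ℝ → ℝ) (hRcont : ContinuousOn R (Set.Icc 0 r))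
    (hRge : ∀ t ∈ Set.Icc (0 : ℝ) r, ((n : ℝ) - 1) * a + f' t ≤ R t) :
    (∫ t in (0 : ℝ)..r,
        (((n : ℝ) - 1) * (π / r) ^ 2 * Real.cos (π * t / r) ^ 2
          - R t * Real.sin (π * t / r) ^ 2)) ≤ 0 := by
  set m : ℝ := (n : ℝ) - 1 with hm_def
  have hm : (1 : ℝ) ≤ m := by
    have : (2 : ℝ) ≤ (n : ℝ) := by exact_mod_cast hn
    linarith [hm_def.le, hm_def.ge]
  have hmpos : 0 < m := by linarith
  clear_value m
  -- basic positivity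
  have harg : 0 < π ^ 2 / a + Λ ^ 2 / (a ^ 2 * m ^ 2) := by positivity
  set s : ℝ := Real.sqrt (π ^ 2 / a + Λ ^ 2 / (a ^ 2 * m ^ 2)) with hs_def
  have hs0 : 0 < s := Real.sqrt_pos.mpr harg
  have hs2 : s ^ 2 = π ^ 2 / a + Λ ^ 2 / (a ^ 2 * m ^ 2) := Real.sq_sqrt harg.le
  have hq0 : 0 ≤ Λ / (a * m) := by positivity
  clear_value s
  have hrpos : 0 < r := by linarith
  have h0r : (0 : ℝ) ≤ r := hrpos.le
  have huIcc : Set.uIcc (0 : ℝ) r = Set.Icc 0 r := Set.uIcc_of_le h0r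
  set c : ℝ := π / r with hc_def
  have hcpos : 0 < c := by positivity
  have hcr : c * r = π := by rw [hc_def]; field_simp
  clear_value c
  -- rewrite π * t / r as c * t
  have hrw : ∀ t : ℝ, π * t / r = c * t := fun t => by rw [hc_def]; ring
  -- antiderivative computations
  have hFcos : ∀ t : ℝ, HasDerivAt (fun t => t / 2 + Real.sin (2 * c * t) / (4 * c))
      (Real.cos (c * t) ^ 2) t := by
    intro t
    have h1 : HasDerivAt (fun t : ℝ => t / 2) (1 / 2) t := (hasDerivAt_id t).div_const 2
    have h2 : HasDerivAt (fun t : ℝ => 2 * c * t) (2 * c) t := by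
      simpa using (hasDerivAt_id t).const_mul (2 * c)
    have h3 : HasDerivAt (fun t : ℝ => Real.sin (2 * c * t)) (Real.cos (2 * c * t) * (2 * c)) t :=
      (Real.hasDerivAt_sin _).comp t h2
    have h4 := h1.add (h3.div_const (4 * c))
    refine h4.congr_deriv ?_
    rw [Real.cos_sq, mul_assoc (2:ℝ) c t]
    field_simp
    ring
  have hGsin : ∀ t : ℝ, HasDerivAt (fun t => t / 2 - Real.sin (2 * c * t) / (4 * c))
      (Real.sin (c * t) ^ 2) t := by
    intro t
    have h1 : HasDerivAt (fun t : ℝ => t / 2) (1 / 2) t := (hasDerivAt_id t).div_const 2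
    have h2 : HasDerivAt (fun t : ℝ => 2 * c * t) (2 * c) t := by
      simpa using (hasDerivAt_id t).const_mul (2 * c)
    have h3 : HasDerivAt (fun t : ℝ => Real.sin (2 * c * t)) (Real.cos (2 * c * t) * (2 * c)) t :=
      (Real.hasDerivAt_sin _).comp t h2
    have h4 := h1.sub (h3.div_const (4 * c))
    refine h4.congr_deriv ?_
    rw [Real.sin_sq_eq_half_sub, mul_assoc (2:ℝ) c t]
    field_simp
    ring
  have hcos_cont : Continuous fun t : ℝ => Real.cos (c * t) ^ 2 :=
    (Real.continuous_cos.comp (continuous_const.mul continuous_id)).pow 2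
  have hsin_cont : Continuous fun t : ℝ => Real.sin (c * t) ^ 2 :=
    (Real.continuous_sin.comp (continuous_const.mul continuous_id)).pow 2
  have hsin2r : Real.sin (2 * c * r) = 0 := by
    rw [mul_assoc, hcr]; simp [Real.sin_two_pi]
  have hIcos : (∫ t in (0:ℝ)..r, Real.cos (c * t) ^ 2) = r / 2 := by
    rw [intervalIntegral.integral_eq_sub_of_hasDerivAt (fun t _ => hFcos t)
      (hcos_cont.intervalIntegrable 0 r)]
    simp [hsin2r]
  have hIsin : (∫ t in (0:ℝ)..r, Real.sin (c * t) ^ 2) = r / 2 := by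
    rw [intervalIntegral.integral_eq_sub_of_hasDerivAt (fun t _ => hGsin t)
      (hsin_cont.intervalIntegrable 0 r)]
    simp [hsin2r]
  -- integration by parts for ∫ f' sin²
  have hv' : ∀ t : ℝ, HasDerivAt (fun t => Real.sin (c * t) ^ 2)
      (Real.sin (2 * (c * t)) * c) t := by
    intro t
    have h2 : HasDerivAt (fun t : ℝ => c * t) c t := by
      simpa using (hasDerivAt_id t).const_mul c
    have h3 : HasDerivAt (fun t : ℝ => Real.sin (c * t)) (Real.cos (c * t) * c) t :=
      (Real.hasDerivAt_sin _).comp t h2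
    have h4 := h3.pow 2
    refine h4.congr_deriv ?_
    rw [Real.sin_two_mul]; ring
  have hf'int : IntervalIntegrable f' MeasureTheory.volume 0 r :=
    (hf'cont.mono (by rw [huIcc])).intervalIntegrable
  have hfcont : ContinuousOn f (Set.uIcc 0 r) := by
    rw [huIcc]; exact fun t ht => (hf t ht).continuousAt.continuousWithinAt
  have hIBP : (∫ t in (0:ℝ)..r, f' t * Real.sin (c * t) ^ 2)
      = - ∫ t in (0:ℝ)..r, f t * (Real.sin (2 * (c * t)) * c) := by
    have := intervalIntegral.integral_mul_deriv_eq_deriv_mul_of_hasDerivAt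
      (u := f) (v := fun t => Real.sin (c * t) ^ 2) (u' := f')
      (v' := fun t => Real.sin (2 * (c * t)) * c)
      hfcont (hsin_cont.continuousOn)
      (fun x hx => hf x ⟨le_of_lt (by simpa [min_eq_left h0r] using hx.1),
        le_of_lt (by simpa [max_eq_right h0r] using hx.2)⟩)
      (fun x _ => hv' x)
      hf'int
      (((Real.continuous_sin.comp (continuous_const.mul (continuous_const.mul
        continuous_id))).mul continuous_const).intervalIntegrable 0 r)
    have hb : Real.sin (c * r) ^ 2 = 0 := by rw [hcr]; simp
    rw [mul_comm] at this
    -- ∫ f t * v' t = f r * v r - f 0 * v 0 - ∫ f' t * v t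
    rw [this]
    simp [hb]
  -- bound on ∫ f t * sin(2ct) * c
  have hbnd : |∫ t in (0:ℝ)..r, f t * (Real.sin (2 * (c * t)) * c)| ≤ Λ := by
    have h := intervalIntegral.norm_integral_le_of_norm_le_const
      (C := Λ / π * c) (f := fun t => f t * (Real.sin (2 * (c * t)) * c)) (a := 0) (b := r) ?_
    · rw [Real.norm_eq_abs] at h
      have : Λ / π * c * |r - 0| = Λ := by
        rw [hc_def, abs_of_nonneg (by linarith : (0:ℝ) ≤ r - 0)]
        field_simp
        ring
      rw [this] at h; exact h
    · intro x hx
      have hx' : x ∈ Set.Icc (0:ℝ) r := by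
        rw [Set.uIoc_of_le h0r] at hx; exact Set.Ioc_subset_Icc_self hx
      rw [Real.norm_eq_abs, abs_mul, abs_mul]
      have h1 := hfbound x hx'
      have h2 : |Real.sin (2 * (c * x))| ≤ 1 := Real.abs_sin_le_one _
      have h3 : |c| = c := abs_of_pos hcpos
      have hfp : 0 ≤ Λ / π := by positivity
      calc |f x| * (|Real.sin (2 * (c * x))| * |c|) ≤ (Λ / π) * (1 * c) := by
            apply mul_le_mul h1 _ (by positivity) hfp
            rw [h3]; exact mul_le_mul_of_nonneg_right h2 hcpos.le
        _ = Λ / π * c := by ring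
  have hIf' : - (∫ t in (0:ℝ)..r, f' t * Real.sin (c * t) ^ 2) ≤ Λ := by
    rw [hIBP, neg_neg]
    exact (abs_le.mp hbnd).2
  -- rewrite the main integral with c
  have hmain : (∫ t in (0 : ℝ)..r,
        (m * c ^ 2 * Real.cos (π * t / r) ^ 2 - R t * Real.sin (π * t / r) ^ 2))
      = ∫ t in (0 : ℝ)..r, (m * c ^ 2 * Real.cos (c * t) ^ 2 - R t * Real.sin (c * t) ^ 2) := by
    apply intervalIntegral.integral_congr
    intro t _
    simp only [hrw]
  rw [hmain]
  -- monotonicity: replace R by (m*a + f')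
  have hint1 : IntervalIntegrable
      (fun t => m * c ^ 2 * Real.cos (c * t) ^ 2 - R t * Real.sin (c * t) ^ 2)
      MeasureTheory.volume 0 r := by
    apply ContinuousOn.intervalIntegrable
    rw [huIcc]
    exact ((continuous_const.mul hcos_cont).continuousOn).sub
      (hRcont.mul hsin_cont.continuousOn)
  have hint2 : IntervalIntegrable
      (fun t => m * c ^ 2 * Real.cos (c * t) ^ 2 - (m * a + f' t) * Real.sin (c * t) ^ 2)
      MeasureTheory.volume 0 r := by
    apply ContinuousOn.intervalIntegrable
    rw [huIcc]
    exact ((continuous_const.mul hcos_cont).continuousOn).sub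
      (((continuousOn_const.add hf'cont)).mul hsin_cont.continuousOn)
  have hmono : (∫ t in (0:ℝ)..r, (m * c ^ 2 * Real.cos (c * t) ^ 2 - R t * Real.sin (c * t) ^ 2))
      ≤ ∫ t in (0:ℝ)..r,
        (m * c ^ 2 * Real.cos (c * t) ^ 2 - (m * a + f' t) * Real.sin (c * t) ^ 2) := by
    apply intervalIntegral.integral_mono_on h0r hint1 hint2
    intro t ht
    have h := hRge t ht
    have hsq : 0 ≤ Real.sin (c * t) ^ 2 := sq_nonneg _
    nlinarith [mul_le_mul_of_nonneg_right h hsq]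
  -- compute the RHS integral
  have hf'sinint : IntervalIntegrable (fun t => f' t * Real.sin (c * t) ^ 2)
      MeasureTheory.volume 0 r := by
    apply ContinuousOn.intervalIntegrable
    rw [huIcc]
    exact (hf'cont.mul hsin_cont.continuousOn)
  have hsplit : (∫ t in (0:ℝ)..r,
        (m * c ^ 2 * Real.cos (c * t) ^ 2 - (m * a + f' t) * Real.sin (c * t) ^ 2))
      = m * c ^ 2 * (r / 2) - m * a * (r / 2)
        - ∫ t in (0:ℝ)..r, f' t * Real.sin (c * t) ^ 2 := by
    have heq : (fun t => m * c ^ 2 * Real.cos (c * t) ^ 2 - (m * a + f' t) * Real.sin (c * t) ^ 2)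
        = fun t => (m * c ^ 2 * Real.cos (c * t) ^ 2 - m * a * Real.sin (c * t) ^ 2)
            - f' t * Real.sin (c * t) ^ 2 := by
      funext t; ring
    rw [heq, intervalIntegral.integral_sub _ hf'sinint]
    · congr 1
      rw [intervalIntegral.integral_sub (f := fun t => m * c ^ 2 * Real.cos (c * t) ^ 2)
        (g := fun t => m * a * Real.sin (c * t) ^ 2) ((continuous_const.mul hcos_cont).intervalIntegrable 0 r)
        ((continuous_const.mul hsin_cont).intervalIntegrable 0 r),
        intervalIntegral.integral_const_mul, intervalIntegral.integral_const_mul, hIcos, hIsin]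
    · exact ((continuous_const.mul hcos_cont).sub (continuous_const.mul hsin_cont)).intervalIntegrable 0 r
  -- final arithmetic
  have key : m * π ^ 2 + 2 * Λ * r ≤ m * a * r ^ 2 := by
    have h1 : s ≤ r - Λ / (a * m) := by linarith
    have h2 : s ^ 2 ≤ (r - Λ / (a * m)) ^ 2 := pow_le_pow_left₀ hs0.le h1 2
    rw [hs2] at h2
    have hampos : 0 < a * m := by positivity
    have h3 := mul_le_mul_of_nonneg_right h2 hampos.le
    have eL : (π ^ 2 / a + Λ ^ 2 / (a ^ 2 * m ^ 2)) * (a * m)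
        = m * π ^ 2 + Λ ^ 2 / (a * m) := by
      field_simp
    have eR : (r - Λ / (a * m)) ^ 2 * (a * m)
        = m * a * r ^ 2 - 2 * Λ * r + Λ ^ 2 / (a * m) := by
      field_simp
      ring
    rw [eL, eR] at h3
    linarith
  have hfin : m * c ^ 2 * (r / 2) - m * a * (r / 2) + Λ ≤ 0 := by
    have hcr2 : c ^ 2 * r = π ^ 2 / r := by
      rw [hc_def]; field_simp
    have : m * c ^ 2 * (r / 2) - m * a * (r / 2) + Λ
        = (m * π ^ 2 + 2 * Λ * r - m * a * r ^ 2) / (2 * r) := by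
      rw [hc_def]
      field_simp
      ring
    rw [this]
    apply div_nonpos_of_nonpos_of_nonneg
    · linarith
    · linarith
  calc (∫ t in (0:ℝ)..r, (m * c ^ 2 * Real.cos (c * t) ^ 2 - R t * Real.sin (c * t) ^ 2))
      ≤ m * c ^ 2 * (r / 2) - m * a * (r / 2)
        - ∫ t in (0:ℝ)..r, f' t * Real.sin (c * t) ^ 2 := by rw [← hsplit]; exact hmono
    _ ≤ m * c ^ 2 * (r / 2) - m * a * (r / 2) + Λ := by linarith
    _ ≤ 0 := hfin
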